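/- Let R be an integral domain and I a nonzero principal proper ideal. Then the projective dimension of O₁ = {(0, i) : i ∈ I} over R ⋈ I is infinite; in particular, the global dimension of R ⋈ I is infinite. -/

import Mathlib

set_option synthInstance.maxHeartbeats 1000000
set_option maxHeartbeats 1000000

/-- The amalgamated duplication of a ring `R` along an ideal `I`, as a subring of `R × R`. -/
def dup (R : Type*) [CommRing R] (I : Ideal R) : Subring (R × R) where
  carrier := {x | x.2 - x.1 ∈ I}
  zero_mem' := by simp
  one_mem' := by simp
  add_mem' := by
    intro a b ha hb
    show a.2 + b.2 - (a.1 + b.1) ∈ I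
    have h : a.2 + b.2 - (a.1 + b.1) = (a.2 - a.1) + (b.2 - b.1) := by ring
    rw [h]; exact I.add_mem ha hb
  neg_mem' := by
    intro a ha
    show -a.2 - -a.1 ∈ I
    have h : -a.2 - -a.1 = -(a.2 - a.1) := by ring
    rw [h]; exact I.neg_mem ha
  mul_mem' := by
    intro a b ha hb
    show a.2 * b.2 - a.1 * b.1 ∈ I
    have h : a.2 * b.2 - a.1 * b.1 = a.2 * (b.2 - b.1) + b.1 * (a.2 - a.1) := by ring
    rw [h]; exact I.add_mem (I.mul_mem_left _ hb) (I.mul_mem_left _ ha)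

/-- The diagonal embedding `R → R ⋈ I`. -/
def diag (R : Type*) [CommRing R] (I : Ideal R) : R →+* dup R I where
  toFun r := ⟨(r, r), show r - r ∈ I by simp⟩
  map_one' := rfl
  map_mul' _ _ := rfl
  map_zero' := rfl
  map_add' _ _ := rfl

/-- The first projection `R ⋈ I → R`. -/
def pr1 (R : Type u) [CommRing R] (I : Ideal R) : dup R I →+* R :=
  (RingHom.fst R R).comp (dup R I).subtype

/-- `pdLE R n M` means the projective dimension of `M` over `R` is at most `n`. -/
def pdLE (R : Type v) [Ring R] : ℕ → ∀ (M : Type u) [AddCommGroup M] [Module R M], Prop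
  | 0 => fun M _ _ => Module.Projective R M
  | n + 1 => fun M _ _ =>
      ∃ (P : Type u) (_ : AddCommGroup P) (_ : Module R P) (f : P →ₗ[R] M),
        Module.Projective R P ∧ Function.Surjective f ∧ pdLE R n (LinearMap.ker f)

/-- The projective dimension of `M` over `R`, as an element of `ℕ∞`. -/
noncomputable def projDim (R : Type v) [Ring R] (M : Type u) [AddCommGroup M]
    [Module R M] : ℕ∞ :=
  sInf {n : ℕ∞ | ∃ m : ℕ, n = m ∧ pdLE R m M}

/-- The global dimension of `R`: the supremum of the projective dimensions of all
`R`-modules (in the universe of `R`). -/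
noncomputable def globalDim (R : Type u) [Ring R] : ℕ∞ :=
  sSup {n : ℕ∞ | ∃ (M : Type u) (_ : AddCommGroup M) (_ : Module R M), projDim R M = n}

section Helpers

universe y x

variable {A : Type x} [Ring A]

/-- Splitting lemma. -/
noncomputable def splitEquiv {M N : Type y} [AddCommGroup M] [AddCommGroup N]
    [Module A M] [Module A N] (g : M →ₗ[A] N) (s : N →ₗ[A] M)
    (hs : g.comp s = LinearMap.id) : M ≃ₗ[A] (LinearMap.ker g × N) where
  toFun m := (⟨m - s (g m), by
      have h1 : g (s (g m)) = g m := LinearMap.congr_fun hs (g m)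
      simp [LinearMap.mem_ker, map_sub, h1]⟩, g m)
  invFun p := p.1.1 + s p.2
  left_inv m := by simp
  right_inv p := by
    have h0 : g p.1.1 = 0 := p.1.2
    have h1 : g (s p.2) = p.2 := LinearMap.congr_fun hs p.2
    refine Prod.ext (Subtype.ext ?_) ?_ <;> simp [h0, h1]
  map_add' m m' := by
    refine Prod.ext (Subtype.ext ?_) ?_ <;> simp <;> abel
  map_smul' c m := by
    refine Prod.ext (Subtype.ext ?_) ?_ <;> simp [smul_sub]

theorem pdLE_zero_iff {M : Type y} [AddCommGroup M] [Module A M] :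
    pdLE A 0 M ↔ Module.Projective A M := Iff.rfl

theorem pdLE_of_equiv :
    ∀ (n : ℕ) {M N : Type y} [AddCommGroup M] [AddCommGroup N] [Module A M] [Module A N],
    (M ≃ₗ[A] N) → pdLE A n M → pdLE A n N := by
  intro n
  induction n with
  | zero =>
    intro M N _ _ _ _ e h
    have : Module.Projective A M := h
    exact Module.Projective.of_equiv e
  | succ n ih =>
    rintro M N _ _ _ _ e ⟨P, i1, i2, f, hP, hf, hk⟩
    refine ⟨P, i1, i2, e.toLinearMap.comp f, hP, e.surjective.comp hf, ?_⟩
    have hker : LinearMap.ker (e.toLinearMap.comp f) = LinearMap.ker f := by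
      rw [LinearMap.ker_comp]
      rw [show LinearMap.ker e.toLinearMap = ⊥ from LinearEquiv.ker e]
      rfl
    exact ih (LinearEquiv.ofEq _ _ hker.symm) hk

end Helpers

section Helpers2
universe y x
variable {A : Type x} [Ring A]

theorem pdLE_prod_left :
    ∀ (n : ℕ) {M Q : Type y} [AddCommGroup M] [AddCommGroup Q] [Module A M] [Module A Q],
    Module.Projective A Q → pdLE A n M → pdLE A n (M × Q) := by
  intro n
  induction n with
  | zero =>
    intro M Q _ _ _ _ hQ h
    have : Module.Projective A M := h
    have : Module.Projective A Q := hQ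
    exact (inferInstance : Module.Projective A (M × Q))
  | succ n ih =>
    rintro M Q _ _ _ _ hQ ⟨P, i1, i2, f, hP, hf, hk⟩
    have : Module.Projective A P := hP
    have : Module.Projective A Q := hQ
    refine ⟨P × Q, inferInstance, inferInstance,
      f.prodMap (LinearMap.id : Q →ₗ[A] Q), inferInstance, ?_, ?_⟩
    · rintro ⟨m, q⟩
      obtain ⟨p, rfl⟩ := hf m
      exact ⟨(p, q), rfl⟩
    · refine pdLE_of_equiv n ?_ hk
      -- ker f ≃ ker (f.prodMap id)
      exact
      { toFun := fun k => ⟨((k : P), 0), by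
          have hk2 : f (k : P) = 0 := k.2
          simp [LinearMap.mem_ker, LinearMap.prodMap_apply, hk2, Prod.ext_iff]⟩
        invFun := fun x => ⟨x.1.1, by
          have := x.2
          simp only [LinearMap.mem_ker, LinearMap.prodMap_apply, Prod.ext_iff] at this ⊢
          exact this.1⟩
        left_inv := fun k => rfl
        right_inv := fun x => by
          have := x.2
          simp only [LinearMap.mem_ker, LinearMap.prodMap_apply, Prod.ext_iff] at this
          exact Subtype.ext (Prod.ext rfl (by simpa using this.2.symm))
        map_add' := fun a b => by
          refine Subtype.ext (Prod.ext rfl ?_); simp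
        map_smul' := fun c a => by
          refine Subtype.ext (Prod.ext rfl ?_); simp }

theorem pdLE_prod_right :
    ∀ (n : ℕ) {M Q : Type y} [AddCommGroup M] [AddCommGroup Q] [Module A M] [Module A Q],
    Module.Projective A Q → pdLE A n (M × Q) → pdLE A n M := by
  intro n
  induction n with
  | zero =>
    intro M Q _ _ _ _ hQ h
    have : Module.Projective A (M × Q) := h
    exact Module.Projective.of_split (LinearMap.inl A M Q) (LinearMap.fst A M Q) rfl
  | succ n ih =>
    rintro M Q _ _ _ _ hQ ⟨P, i1, i2, f, hP, hf, hk⟩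
    have hQ' : Module.Projective A Q := hQ
    set f₁ : P →ₗ[A] M := (LinearMap.fst A M Q).comp f with hf₁
    have hf₁s : Function.Surjective f₁ := (Prod.fst_surjective).comp hf
    set g : ↥(LinearMap.ker f₁) →ₗ[A] Q :=
      ((LinearMap.snd A M Q).comp f).comp (LinearMap.ker f₁).subtype with hg
    have hgs : Function.Surjective g := by
      intro q
      obtain ⟨p, hp⟩ := hf (0, q)
      refine ⟨⟨p, ?_⟩, ?_⟩
      · show (f p).1 = 0
        rw [hp]
      · show (f p).2 = q
        rw [hp]
    obtain ⟨s, hs⟩ := Module.projective_lifting_property g (LinearMap.id : Q →ₗ[A] Q) hgs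
    have e1 : ↥(LinearMap.ker f₁) ≃ₗ[A] (↥(LinearMap.ker g) × Q) := splitEquiv g s hs
    have e2 : ↥(LinearMap.ker f) ≃ₗ[A] ↥(LinearMap.ker g) :=
      { toFun := fun k => ⟨⟨(k : P), by
            have hk2 : f (k : P) = 0 := k.2
            show (f (k : P)).1 = 0
            rw [hk2]; rfl⟩, by
          have hk2 : f (k : P) = 0 := k.2
          show (f (k : P)).2 = 0
          rw [hk2]; rfl⟩
        invFun := fun x => ⟨(x : ↥(LinearMap.ker f₁)) , by
          have h1 : (f ((x : ↥(LinearMap.ker f₁)) : P)).1 = 0 := (x : ↥(LinearMap.ker f₁)).2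
          have h2 : (f ((x : ↥(LinearMap.ker f₁)) : P)).2 = 0 := x.2
          show f _ = 0
          exact Prod.ext h1 h2⟩
        left_inv := fun k => rfl
        right_inv := fun x => rfl
        map_add' := fun a b => rfl
        map_smul' := fun c a => rfl }
    refine ⟨P, i1, i2, f₁, hP, hf₁s, ?_⟩
    exact pdLE_of_equiv n (e1.symm) (pdLE_prod_left n hQ (pdLE_of_equiv n e2 hk))

end Helpers2

section Schanuel
universe y x
variable {A : Type x} [Ring A]
variable {M P P' : Type y} [AddCommGroup M] [AddCommGroup P] [AddCommGroup P']
  [Module A M] [Module A P] [Module A P']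

theorem schanuel_aux (hP' : Module.Projective A P') (f : P →ₗ[A] M) (f' : P' →ₗ[A] M)
    (hf : Function.Surjective f) :
    Nonempty ((↥(LinearMap.ker f) × P') ≃ₗ[A]
      ↥(LinearMap.ker (f.comp (LinearMap.fst A P P') - f'.comp (LinearMap.snd A P P')))) := by
  set F : (P × P') →ₗ[A] M :=
    f.comp (LinearMap.fst A P P') - f'.comp (LinearMap.snd A P P') with hF
  have hFapp : ∀ z : P × P', F z = f z.1 - f' z.2 := fun z => rfl
  set g : ↥(LinearMap.ker F) →ₗ[A] P' :=
    (LinearMap.snd A P P').comp (LinearMap.ker F).subtype with hg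
  have hgs : Function.Surjective g := by
    intro p'
    obtain ⟨p, hp⟩ := hf (f' p')
    exact ⟨⟨(p, p'), show F (p, p') = 0 by rw [hFapp, hp, sub_self]⟩, rfl⟩
  haveI := hP'
  obtain ⟨s, hs⟩ := Module.projective_lifting_property g LinearMap.id hgs
  have e1 : ↥(LinearMap.ker F) ≃ₗ[A] (↥(LinearMap.ker g) × P') := splitEquiv g s hs
  have e2 : ↥(LinearMap.ker f) ≃ₗ[A] ↥(LinearMap.ker g) :=
    { toFun := fun k => ⟨⟨((k : P), 0), by
          show F ((k : P), 0) = 0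
          rw [hFapp]
          have hk2 : f (k : P) = 0 := k.2
          rw [hk2, map_zero, sub_zero]⟩, rfl⟩
      invFun := fun x => ⟨(x : ↥(LinearMap.ker F)).1.1, by
        have h1 : F (x : ↥(LinearMap.ker F)).1 = 0 := (x : ↥(LinearMap.ker F)).2
        have h2 : ((x : ↥(LinearMap.ker F)).1).2 = 0 := x.2
        rw [hFapp, h2, map_zero, sub_zero] at h1
        exact h1⟩
      left_inv := fun k => rfl
      right_inv := fun x => by
        refine Subtype.ext (Subtype.ext (Prod.ext rfl ?_))
        exact (show ((x : ↥(LinearMap.ker F)).1).2 = 0 from x.2).symm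
      map_add' := fun a b => by
        refine Subtype.ext (Subtype.ext (Prod.ext rfl ?_)); simp
      map_smul' := fun c a => by
        refine Subtype.ext (Subtype.ext (Prod.ext rfl ?_)); simp }
  exact ⟨(LinearEquiv.prodCongr e2 (LinearEquiv.refl A P')).trans e1.symm⟩

theorem schanuel (hP : Module.Projective A P) (hP' : Module.Projective A P')
    (f : P →ₗ[A] M) (f' : P' →ₗ[A] M)
    (hf : Function.Surjective f) (hf' : Function.Surjective f') :
    Nonempty ((↥(LinearMap.ker f) × P') ≃ₗ[A] (↥(LinearMap.ker f') × P)) := by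
  obtain ⟨e1⟩ := schanuel_aux hP' f f' hf
  obtain ⟨e2⟩ := schanuel_aux hP f' f hf'
  set F : (P × P') →ₗ[A] M :=
    f.comp (LinearMap.fst A P P') - f'.comp (LinearMap.snd A P P') with hF
  set F' : (P' × P) →ₗ[A] M :=
    f'.comp (LinearMap.fst A P' P) - f.comp (LinearMap.snd A P' P) with hF'
  have e3 : ↥(LinearMap.ker F) ≃ₗ[A] ↥(LinearMap.ker F') :=
    { toFun := fun x => ⟨((x : P × P').2, (x : P × P').1), by
        have h1 : f (x : P × P').1 - f' (x : P × P').2 = 0 := x.2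
        show f' (x : P × P').2 - f (x : P × P').1 = 0
        rw [sub_eq_zero] at h1 ⊢
        exact h1.symm⟩
      invFun := fun x => ⟨((x : P' × P).2, (x : P' × P).1), by
        have h1 : f' (x : P' × P).1 - f (x : P' × P).2 = 0 := x.2
        show f (x : P' × P).2 - f' (x : P' × P).1 = 0
        rw [sub_eq_zero] at h1 ⊢
        exact h1.symm⟩
      left_inv := fun x => rfl
      right_inv := fun x => rfl
      map_add' := fun a b => rfl
      map_smul' := fun c a => rfl }
  exact ⟨e1.trans (e3.trans e2.symm)⟩

end Schanuel


/-- The second projection `R ⋈ I → R`. -/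
def pr2' (R : Type u) [CommRing R] (I : Ideal R) : dup R I →+* R :=
  (RingHom.snd R R).comp (dup R I).subtype


theorem pdLE_descend {A M : Type u} [Ring A] [AddCommGroup M] [Module A M]
    (g : A →ₗ[A] M) (hg : Function.Surjective g) {n : ℕ}
    (h : pdLE A (n + 1) M) : pdLE A n ↥(LinearMap.ker g) := by
  obtain ⟨P, i1, i2, f, hP, hf, hk⟩ := h
  obtain ⟨e⟩ := schanuel hP (inferInstance : Module.Projective A A) f g hf hg
  exact pdLE_prod_right n hP (pdLE_of_equiv n e (pdLE_prod_left n inferInstance hk))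

/-- if `R` is a domain and `I = Ra ≠ 0` is a principal proper ideal, then
`pd_{R ⋈ I}(O₁) = ∞` where `O₁ = ker π₁ = {(0,i) : i ∈ I}`; in particular
`gldim(R ⋈ I) = ∞`. -/


theorem projDim_O1_eq_top (R : Type u) [CommRing R] [IsDomain R] (I : Ideal R) (a : R)
    (ha : I = Ideal.span {a}) (hne : I ≠ ⊥) (hI : I ≠ ⊤) :
    projDim (dup R I) (RingHom.ker (pr1 R I)) = ⊤ ∧ globalDim (dup R I) = ⊤ := by
  have haI : a ∈ I := ha ▸ Ideal.mem_span_singleton_self a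
  have ha0 : a ≠ 0 := by
    rintro rfl
    exact hne (by rw [ha, Ideal.span_singleton_eq_bot.mpr rfl])
  set S := dup R I with hS
  set O₁ : Ideal S := RingHom.ker (pr1 R I) with hO₁
  set O₂ : Ideal S := RingHom.ker (pr2' R I) with hO₂
  have memO₁ : ∀ s : S, s ∈ O₁ ↔ (s : R × R).1 = 0 := fun s => Iff.rfl
  have memO₂ : ∀ s : S, s ∈ O₂ ↔ (s : R × R).2 = 0 := fun s => Iff.rfl
  -- elements
  have hmema : ((0, a) : R × R) ∈ dup R I := by show a - 0 ∈ I; simpa using haI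
  have hmemb : ((a, 0) : R × R) ∈ dup R I := by show (0 : R) - a ∈ I; simpa using I.neg_mem haI
  set αS : S := ⟨(0, a), hmema⟩ with hαS
  set βS : S := ⟨(a, 0), hmemb⟩ with hβS
  have hα : αS ∈ O₁ := by rw [memO₁]
  have hβ : βS ∈ O₂ := by rw [memO₂]
  set α : ↥O₁ := ⟨αS, hα⟩ with hα'
  set β : ↥O₂ := ⟨βS, hβ⟩ with hβ'
  -- the two multiplication maps
  set μ : S →ₗ[S] ↥O₁ := LinearMap.toSpanSingleton S ↥O₁ α with hμ
  set ν : S →ₗ[S] ↥O₂ := LinearMap.toSpanSingleton S ↥O₂ β with hν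
  have hμapp : ∀ s : S, ((μ s : ↥O₁) : R × R) = ((s : R × R).1 * 0, (s : R × R).2 * a) := by
    intro s
    show (((s • α : ↥O₁) : S) : R × R) = _
    rw [Submodule.coe_smul, smul_eq_mul]
    rfl
  have hνapp : ∀ s : S, ((ν s : ↥O₂) : R × R) = ((s : R × R).1 * a, (s : R × R).2 * 0) := by
    intro s
    show (((s • β : ↥O₂) : S) : R × R) = _
    rw [Submodule.coe_smul, smul_eq_mul]
    rfl
  have hμsurj : Function.Surjective μ := by
    intro x
    have h1 : ((x : S) : R × R).1 = 0 := x.2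
    have h2 : ((x : S) : R × R).2 - ((x : S) : R × R).1 ∈ I := (x : S).2
    rw [h1, sub_zero, ha] at h2
    obtain ⟨c, hc⟩ := Ideal.mem_span_singleton'.mp h2
    refine ⟨⟨(c, c), by show c - c ∈ I; simp⟩, ?_⟩
    refine Subtype.ext (Subtype.ext ?_)
    rw [hμapp]
    exact Prod.ext (by simpa using h1.symm) (by simpa using hc)
  have hνsurj : Function.Surjective ν := by
    intro x
    have h1 : ((x : S) : R × R).2 = 0 := x.2
    have h2 : ((x : S) : R × R).2 - ((x : S) : R × R).1 ∈ I := (x : S).2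
    rw [h1, zero_sub, neg_mem_iff, ha] at h2
    obtain ⟨c, hc⟩ := Ideal.mem_span_singleton'.mp h2
    refine ⟨⟨(c, c), by show c - c ∈ I; simp⟩, ?_⟩
    refine Subtype.ext (Subtype.ext ?_)
    rw [hνapp]
    exact Prod.ext (by simpa using hc) (by simpa using h1.symm)
  -- kernels
  have hkerμ : LinearMap.ker μ = (O₂ : Submodule S S) := by
    ext s
    rw [LinearMap.mem_ker, memO₂]
    constructor
    · intro h
      have := congrArg (fun z : ↥O₁ => ((z : S) : R × R).2) h
      simp only [hμapp] at this
      have h2 : (s : R × R).2 * a = 0 := by simpa using this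
      rcases mul_eq_zero.mp h2 with h | h
      · exact h
      · exact absurd h ha0
    · intro h
      refine Subtype.ext (Subtype.ext ?_)
      rw [hμapp]
      exact Prod.ext (by simp) (by simp [h])
  have hkerν : LinearMap.ker ν = (O₁ : Submodule S S) := by
    ext s
    rw [LinearMap.mem_ker, memO₁]
    constructor
    · intro h
      have := congrArg (fun z : ↥O₂ => ((z : S) : R × R).1) h
      simp only [hνapp] at this
      have h2 : (s : R × R).1 * a = 0 := by simpa using this
      rcases mul_eq_zero.mp h2 with h | h
      · exact h
      · exact absurd h ha0
    · intro h
      refine Subtype.ext (Subtype.ext ?_)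
      rw [hνapp]
      exact Prod.ext (by simp [h]) (by simp)
  -- non-projectivity of O₁
  have hnp1 : ¬ Module.Projective S ↥O₁ := by
    intro h
    obtain ⟨s, hs⟩ := Module.projective_lifting_property μ (LinearMap.id) hμsurj
    set e : S := s α with he
    have h1 : μ e = α := LinearMap.congr_fun hs α
    have h2 : ((e : R × R).1 * 0, (e : R × R).2 * a) = ((0 : R), a) := by
      have := congrArg (fun z : ↥O₁ => ((z : S) : R × R)) h1
      exact (hμapp e).symm.trans this
    have h3 : (e : R × R).2 = 1 := by
      have := (Prod.ext_iff.mp h2).2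
      exact mul_right_cancel₀ ha0 (by simpa using this)
    have h4 : βS • α = 0 := by
      refine Subtype.ext (Subtype.ext ?_)
      show ((βS * αS : S) : R × R) = 0
      rw [Subring.coe_mul]
      show ((a, 0) * (0, a) : R × R) = 0
      simp [Prod.ext_iff]
    have h5 : βS * e = 0 := by
      have : s (βS • α) = βS • e := map_smul s βS α
      rw [h4, map_zero] at this
      rw [← smul_eq_mul, ← this]
    have h6 : a * (e : R × R).1 = 0 := by
      have := congrArg (fun z : S => (z : R × R).1) h5
      simpa [Subring.coe_mul] using this
    have h7 : (e : R × R).1 = 0 := by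
      rcases mul_eq_zero.mp h6 with h | h
      · exact absurd h ha0
      · exact h
    have h8 : (e : R × R).2 - (e : R × R).1 ∈ I := e.2
    rw [h3, h7, sub_zero] at h8
    exact hI (Ideal.eq_top_iff_one I |>.mpr h8)
  -- non-projectivity of O₂
  have hnp2 : ¬ Module.Projective S ↥O₂ := by
    intro h
    obtain ⟨s, hs⟩ := Module.projective_lifting_property ν (LinearMap.id) hνsurj
    set e : S := s β with he
    have h1 : ν e = β := LinearMap.congr_fun hs β
    have h2 : ((e : R × R).1 * a, (e : R × R).2 * 0) = (a, (0 : R)) := by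
      have := congrArg (fun z : ↥O₂ => ((z : S) : R × R)) h1
      exact (hνapp e).symm.trans this
    have h3 : (e : R × R).1 = 1 := by
      have := (Prod.ext_iff.mp h2).1
      exact mul_right_cancel₀ ha0 (by simpa using this)
    have h4 : αS • β = 0 := by
      refine Subtype.ext (Subtype.ext ?_)
      show ((αS * βS : S) : R × R) = 0
      rw [Subring.coe_mul]
      show ((0, a) * (a, 0) : R × R) = 0
      simp [Prod.ext_iff]
    have h5 : αS * e = 0 := by
      have : s (αS • β) = αS • e := map_smul s αS β
      rw [h4, map_zero] at this
      rw [← smul_eq_mul, ← this]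
    have h6 : a * (e : R × R).2 = 0 := by
      have := congrArg (fun z : S => (z : R × R).2) h5
      simpa [Subring.coe_mul] using this
    have h7 : (e : R × R).2 = 0 := by
      rcases mul_eq_zero.mp h6 with h | h
      · exact absurd h ha0
      · exact h
    have h8 : (e : R × R).2 - (e : R × R).1 ∈ I := e.2
    rw [h3, h7, zero_sub, neg_mem_iff] at h8
    exact hI (Ideal.eq_top_iff_one I |>.mpr h8)
  -- main induction
  have key : ∀ n : ℕ, ¬ pdLE S n ↥O₁ ∧ ¬ pdLE S n ↥O₂ := by
    intro n
    induction n with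
    | zero => exact ⟨hnp1, hnp2⟩
    | succ n ih =>
      constructor
      · intro h
        have h3 := pdLE_descend μ hμsurj h
        rw [hkerμ] at h3
        exact ih.2 h3
      · intro h
        have h3 := pdLE_descend ν hνsurj h
        rw [hkerν] at h3
        exact ih.1 h3
  have hproj : projDim S ↥O₁ = ⊤ := by
    have hempty : {n : ℕ∞ | ∃ m : ℕ, n = m ∧ pdLE S m ↥O₁} = ∅ := by
      ext n
      simp only [Set.mem_setOf_eq, Set.mem_empty_iff_false, iff_false]
      rintro ⟨m, rfl, hm⟩
      exact (key m).1 hm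
    rw [projDim, hempty, sInf_empty]
  refine ⟨hproj, ?_⟩
  refine le_antisymm le_top (le_sSup ?_)
  exact ⟨↥O₁, inferInstance, inferInstance, hproj⟩
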